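/- Let (M, d) be a metric space with a Borel measure μ satisfying μ(M) < ∞, let ξ ∈ M, and suppose there are constants C₁ > 0 and n ∈ ℕ, n ≥ 1, such that μ(B(ξ, r)) ≤ C₁ rⁿ for every r > 0, where B(ξ, r) is the open ball of radius r about ξ. Let ν > 0, let m be an integer with 2m > n, let 0 < h ≤ 1, and let C₀ > 0. If χ : M → ℝ is measurable and satisfies |χ(x)| ≤ C₀ · max( exp(−(ν/h)·d(x,ξ)), h^{2m} ) for all x ∈ M, then ∫_M |χ(x)| dμ(x) ≤ C₀ · ( C₁ · n! · ν^{−n} + μ(M) ) · hⁿ. In particular, ‖χ‖_{L¹(M)} ≤ C' hⁿ with a constant C' independent of h and ξ. -/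

import Mathlib

open MeasureTheory Set

lemma image_exp_neg_Ioi : (fun s : ℝ => Real.exp (-s)) '' Set.Ioi 0 = Set.Ioo 0 1 := by
  ext y
  constructor
  · rintro ⟨s, hs, rfl⟩
    exact ⟨Real.exp_pos _, Real.exp_lt_one_iff.mpr (neg_lt_zero.mpr hs)⟩
  · intro hy
    exact ⟨-Real.log y, by simpa using neg_pos.mpr (Real.log_neg hy.1 hy.2),
      by simp [Real.exp_log hy.1]⟩

lemma integral_exp_neg_mul_pow (n : ℕ) :
    ∫ s in Set.Ioi (0:ℝ), Real.exp (-s) * s ^ n = (n.factorial : ℝ) := by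
  have h := Real.Gamma_eq_integral (s := (n : ℝ) + 1) (by positivity)
  rw [Real.Gamma_nat_eq_factorial] at h
  simp only [add_sub_cancel_right, Real.rpow_natCast] at h
  exact h.symm

lemma integrableOn_exp_neg_mul_pow (n : ℕ) :
    IntegrableOn (fun s : ℝ => Real.exp (-s) * s ^ n) (Set.Ioi 0) := by
  have h := Real.GammaIntegral_convergent (s := (n : ℝ) + 1) (by positivity)
  simpa only [add_sub_cancel_right, Real.rpow_natCast] using h

lemma hasDeriv_exp_neg (s : ℝ) :
    HasDerivAt (fun s : ℝ => Real.exp (-s)) (-Real.exp (-s)) s := by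
  have := (Real.hasDerivAt_exp (-s)).comp s (hasDerivAt_neg s)
  simp only [mul_neg, mul_one] at this
  exact this

lemma injOn_exp_neg : Set.InjOn (fun s : ℝ => Real.exp (-s)) (Set.Ioi 0) :=
  fun a _ b _ hab => neg_injective (Real.exp_injective hab)

lemma integral_neg_log_pow (n : ℕ) :
    ∫ t in Set.Ioo (0:ℝ) 1, (-Real.log t) ^ n = (n.factorial : ℝ) := by
  have key := integral_image_eq_integral_abs_deriv_smul (f := fun s : ℝ => Real.exp (-s))
    (f' := fun s : ℝ => -Real.exp (-s)) measurableSet_Ioi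
    (fun x _ => (hasDeriv_exp_neg x).hasDerivWithinAt) injOn_exp_neg
    (fun t => (-Real.log t) ^ n)
  rw [image_exp_neg_Ioi] at key
  rw [key, ← integral_exp_neg_mul_pow n]
  refine setIntegral_congr_fun measurableSet_Ioi fun s _ => ?_
  simp [abs_of_nonneg (Real.exp_pos (-s)).le, Real.log_exp, smul_eq_mul]

lemma integrableOn_neg_log_pow (n : ℕ) :
    IntegrableOn (fun t : ℝ => (-Real.log t) ^ n) (Set.Ioo 0 1) := by
  have key := integrableOn_image_iff_integrableOn_abs_deriv_smul
    (f := fun s : ℝ => Real.exp (-s)) (f' := fun s : ℝ => -Real.exp (-s)) measurableSet_Ioi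
    (fun x _ => (hasDeriv_exp_neg x).hasDerivWithinAt) injOn_exp_neg
    (fun t => (-Real.log t) ^ n)
  rw [image_exp_neg_Ioi] at key
  rw [key]
  refine (integrableOn_exp_neg_mul_pow n).congr_fun (fun s _ => ?_) measurableSet_Ioi
  simp [abs_of_nonneg (Real.exp_pos (-s)).le, Real.log_exp, smul_eq_mul]

lemma lintegral_exp_neg_dist_le {M : Type*} [MetricSpace M] [MeasurableSpace M] [BorelSpace M]
    (μ : Measure M) (ξ : M) (C₁ : ℝ) (hC₁ : 0 < C₁) (n : ℕ)
    (hball : ∀ r : ℝ, 0 < r → μ (Metric.ball ξ r) ≤ ENNReal.ofReal (C₁ * r ^ n))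
    (a : ℝ) (ha : 0 < a) :
    ∫⁻ x, ENNReal.ofReal (Real.exp (-a * dist x ξ)) ∂μ
      ≤ ENNReal.ofReal (C₁ * (n.factorial : ℝ) / a ^ n) := by
  have hmble : Measurable fun x : M => Real.exp (-a * dist x ξ) :=
    (Real.continuous_exp.comp
      (continuous_const.mul (continuous_id.dist continuous_const))).measurable
  rw [lintegral_eq_lintegral_meas_lt μ (Filter.Eventually.of_forall fun x => (Real.exp_pos _).le)
    hmble.aemeasurable]
  have hbound : ∀ t ∈ Set.Ioi (0:ℝ),
      μ {x : M | t < Real.exp (-a * dist x ξ)}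
        ≤ (Set.Ioo (0:ℝ) 1).indicator
            (fun t => ENNReal.ofReal (C₁ * (-Real.log t / a) ^ n)) t := by
    intro t ht
    by_cases ht1 : t < 1
    · rw [Set.indicator_of_mem (Set.mem_Ioo.mpr ⟨ht, ht1⟩)]
      have hr : 0 < -Real.log t / a := div_pos (neg_pos.mpr (Real.log_neg ht ht1)) ha
      refine le_trans (measure_mono ?_) (hball _ hr)
      intro x hx
      simp only [Set.mem_setOf_eq] at hx
      have hlog : Real.log t < -a * dist x ξ := (Real.log_lt_iff_lt_exp ht).mpr hx
      have hda : dist x ξ * a < -Real.log t := by linarith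
      exact Metric.mem_ball.mpr ((lt_div_iff₀ ha).mpr hda)
    · have : {x : M | t < Real.exp (-a * dist x ξ)} = ∅ := by
        ext x
        simp only [Set.mem_setOf_eq, Set.mem_empty_iff_false, iff_false, not_lt]
        calc Real.exp (-a * dist x ξ) ≤ 1 :=
              Real.exp_le_one_iff.mpr (mul_nonpos_of_nonpos_of_nonneg (by linarith) dist_nonneg)
          _ ≤ t := not_lt.mp ht1
      rw [this, Set.indicator_of_notMem (fun hmem => ht1 hmem.2)]
      simp
  refine le_trans (setLIntegral_mono' measurableSet_Ioi hbound) ?_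
  rw [lintegral_indicator measurableSet_Ioo _, Measure.restrict_restrict measurableSet_Ioo,
    Set.inter_eq_left.mpr Set.Ioo_subset_Ioi_self]
  have hint : IntegrableOn (fun t : ℝ => C₁ * (-Real.log t / a) ^ n) (Set.Ioo 0 1) := by
    refine MeasureTheory.IntegrableOn.congr_fun
      ((integrableOn_neg_log_pow n).const_mul (C₁ / a ^ n)) (fun t _ => ?_) measurableSet_Ioo
    rw [div_pow]; ring
  have hnn : 0 ≤ᵐ[volume.restrict (Set.Ioo (0:ℝ) 1)]
      fun t => C₁ * (-Real.log t / a) ^ n := by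
    refine (ae_restrict_iff' measurableSet_Ioo).mpr (Filter.Eventually.of_forall fun t ht => ?_)
    have hlt : 0 ≤ -Real.log t := neg_nonneg.mpr (Real.log_nonpos ht.1.le ht.2.le)
    positivity
  rw [← ofReal_integral_eq_lintegral_ofReal hint hnn]
  apply ENNReal.ofReal_le_ofReal
  have heq : ∫ t in Set.Ioo (0:ℝ) 1, C₁ * (-Real.log t / a) ^ n
      = C₁ / a ^ n * ∫ t in Set.Ioo (0:ℝ) 1, (-Real.log t) ^ n := by
    rw [← MeasureTheory.integral_const_mul]
    refine setIntegral_congr_fun measurableSet_Ioo fun t _ => ?_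
    rw [div_pow]; ring
  rw [heq, integral_neg_log_pow n, div_mul_eq_mul_div]

/-- If `|χ(x)| ≤ C₀ max(exp(−(ν/h)d(x,ξ)), h^{2m})` with `2m > n`,
`0 < h ≤ 1`, and the measure satisfies `μ(B(ξ,r)) ≤ C₁ rⁿ`, then
`‖χ‖_{L¹} ≤ C₀ (C₁ n! ν^{−n} + μ(M)) hⁿ`. -/
theorem lagrange_L1_bound
    {M : Type*} [MetricSpace M] [MeasurableSpace M] [BorelSpace M]
    (μ : Measure M) [IsFiniteMeasure μ]
    (ξ : M) (C₁ : ℝ) (hC₁ : 0 < C₁) (n : ℕ) (hn : 1 ≤ n)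
    (hball : ∀ r : ℝ, 0 < r → μ (Metric.ball ξ r) ≤ ENNReal.ofReal (C₁ * r ^ n))
    (ν : ℝ) (hν : 0 < ν) (m : ℕ) (hm : n < 2 * m)
    (h : ℝ) (hh0 : 0 < h) (hh1 : h ≤ 1) (C₀ : ℝ) (hC₀ : 0 < C₀)
    (χ : M → ℝ) (hχm : Measurable χ)
    (hχ : ∀ x : M, |χ x| ≤ C₀ * max (Real.exp (-(ν / h) * dist x ξ)) (h ^ (2 * m))) :
    ∫ x, |χ x| ∂μ ≤
      C₀ * (C₁ * (Nat.factorial n : ℝ) / ν ^ n + (μ Set.univ).toReal) * h ^ n := by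
  have ha : 0 < ν / h := div_pos hν hh0
  have hexp_m : Measurable fun x : M => Real.exp (-(ν / h) * dist x ξ) :=
    (Real.continuous_exp.comp
      (continuous_const.mul (continuous_id.dist continuous_const))).measurable
  have hT : 0 ≤ (μ Set.univ).toReal := ENNReal.toReal_nonneg
  -- pointwise bound by a sum
  have hpt : ∀ x, |χ x| ≤ C₀ * Real.exp (-(ν / h) * dist x ξ) + C₀ * h ^ (2 * m) := by
    intro x
    have hmax : max (Real.exp (-(ν / h) * dist x ξ)) (h ^ (2 * m))
        ≤ Real.exp (-(ν / h) * dist x ξ) + h ^ (2 * m) :=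
      max_le (le_add_of_nonneg_right (by positivity))
        (le_add_of_nonneg_left (Real.exp_pos _).le)
    calc |χ x| ≤ C₀ * max (Real.exp (-(ν / h) * dist x ξ)) (h ^ (2 * m)) := hχ x
      _ ≤ C₀ * (Real.exp (-(ν / h) * dist x ξ) + h ^ (2 * m)) :=
          mul_le_mul_of_nonneg_left hmax hC₀.le
      _ = C₀ * Real.exp (-(ν / h) * dist x ξ) + C₀ * h ^ (2 * m) := by ring
  have h1 : ∫ x, |χ x| ∂μ = (∫⁻ x, ENNReal.ofReal (|χ x|) ∂μ).toReal := by
    rw [integral_eq_lintegral_of_nonneg_ae (Filter.Eventually.of_forall fun x => abs_nonneg _)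
      hχm.abs.aestronglyMeasurable]
  set B : ℝ := C₀ * (C₁ * (Nat.factorial n : ℝ) / (ν / h) ^ n)
      + C₀ * h ^ (2 * m) * (μ Set.univ).toReal with hB_def
  have key : ∫⁻ x, ENNReal.ofReal (|χ x|) ∂μ ≤ ENNReal.ofReal B := by
    calc ∫⁻ x, ENNReal.ofReal (|χ x|) ∂μ
        ≤ ∫⁻ x, (ENNReal.ofReal (C₀ * Real.exp (-(ν / h) * dist x ξ))
            + ENNReal.ofReal (C₀ * h ^ (2 * m))) ∂μ := by
          refine lintegral_mono fun x => ?_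
          rw [← ENNReal.ofReal_add (by positivity) (by positivity)]
          exact ENNReal.ofReal_le_ofReal (hpt x)
      _ = (∫⁻ x, ENNReal.ofReal (C₀ * Real.exp (-(ν / h) * dist x ξ)) ∂μ)
            + ENNReal.ofReal (C₀ * h ^ (2 * m)) * μ Set.univ := by
          rw [lintegral_add_right _ measurable_const, lintegral_const]
      _ ≤ ENNReal.ofReal (C₀ * (C₁ * (Nat.factorial n : ℝ) / (ν / h) ^ n))
            + ENNReal.ofReal (C₀ * h ^ (2 * m) * (μ Set.univ).toReal) := by
          gcongr
          · calc ∫⁻ x, ENNReal.ofReal (C₀ * Real.exp (-(ν / h) * dist x ξ)) ∂μ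
                = ENNReal.ofReal C₀
                    * ∫⁻ x, ENNReal.ofReal (Real.exp (-(ν / h) * dist x ξ)) ∂μ := by
                  simp_rw [ENNReal.ofReal_mul hC₀.le]
                  rw [lintegral_const_mul _ hexp_m.ennreal_ofReal]
              _ ≤ ENNReal.ofReal C₀
                    * ENNReal.ofReal (C₁ * (Nat.factorial n : ℝ) / (ν / h) ^ n) := by
                  gcongr
                  exact lintegral_exp_neg_dist_le μ ξ C₁ hC₁ n hball (ν / h) ha
              _ = ENNReal.ofReal (C₀ * (C₁ * (Nat.factorial n : ℝ) / (ν / h) ^ n)) :=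
                  (ENNReal.ofReal_mul hC₀.le).symm
          · rw [ENNReal.ofReal_mul (show (0:ℝ) ≤ C₀ * h ^ (2 * m) by positivity),
              ENNReal.ofReal_mul hC₀.le, ENNReal.ofReal_toReal (measure_ne_top μ _)]
      _ = ENNReal.ofReal B := by
          rw [hB_def, ENNReal.ofReal_add (by positivity) (by positivity)]
  rw [h1]
  refine ENNReal.toReal_le_of_le_ofReal (by positivity) (le_trans key ?_)
  apply ENNReal.ofReal_le_ofReal
  have han : C₁ * (Nat.factorial n : ℝ) / (ν / h) ^ n
      = C₁ * (Nat.factorial n : ℝ) / ν ^ n * h ^ n := by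
    rw [div_pow, div_div_eq_mul_div]
    ring
  have h2m : h ^ (2 * m) ≤ h ^ n := pow_le_pow_of_le_one hh0.le hh1 hm.le
  have hmono : C₀ * h ^ (2 * m) * (μ Set.univ).toReal
      ≤ C₀ * h ^ n * (μ Set.univ).toReal := by gcongr
  rw [hB_def, han]
  calc C₀ * (C₁ * (Nat.factorial n : ℝ) / ν ^ n * h ^ n)
        + C₀ * h ^ (2 * m) * (μ Set.univ).toReal
      ≤ C₀ * (C₁ * (Nat.factorial n : ℝ) / ν ^ n * h ^ n)
        + C₀ * h ^ n * (μ Set.univ).toReal := by linarith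
    _ = C₀ * (C₁ * (Nat.factorial n : ℝ) / ν ^ n + (μ Set.univ).toReal) * h ^ n := by ring
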